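/- Let H be a real inner product space which is a Hilbert space, let (V_n) be an increasing sequence of finite-dimensional subspaces of H whose union D = ⋃_n V_n is dense in H, and let T : H → H be a linear map such that T(V_n) ⊆ V_n for every n and ⟪T f, g⟫ = ⟪f, T g⟫ for all f, g ∈ D. Then there exists an orthonormal family (e_k) of vectors of H, all belonging to D, whose closed linear span is H, together with real numbers (λ_k), such that T e_k = λ_k e_k for every k. In particular H admits a complete orthonormal system of eigenvectors of T lying in ⋃_n V_n. -/

import Mathlib

open RealInnerProductSpace

theorem stmt_18 (H : Type) [NormedAddCommGroup H] [InnerProductSpace ℝ H] [CompleteSpace H]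
    (V : ℕ → Submodule ℝ H) (hmono : Monotone V)
    (hfd : ∀ n, FiniteDimensional ℝ (V n))
    (hdense : Dense (⋃ n, (V n : Set H)))
    (T : H →ₗ[ℝ] H) (hTV : ∀ n, ∀ v ∈ V n, T v ∈ V n)
    (hsym : ∀ f ∈ ⋃ n, (V n : Set H), ∀ g ∈ ⋃ n, (V n : Set H), ⟪T f, g⟫ = ⟪f, T g⟫) :
    ∃ (ι : Type) (e : ι → H) (lam : ι → ℝ),
      Orthonormal ℝ e ∧
      (∀ i, e i ∈ ⋃ n, (V n : Set H)) ∧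
      (Submodule.span ℝ (Set.range e)).topologicalClosure = ⊤ ∧
      ∀ i, T (e i) = lam i • e i := by
  classical
  haveI hVfd : ∀ n, FiniteDimensional ℝ (V n) := hfd
  -- the orthogonal pieces
  set W : ℕ → Submodule ℝ H := fun n =>
    Nat.rec (V 0) (fun m _ => V (m + 1) ⊓ (V m)ᗮ) n with hW
  have hW0 : W 0 = V 0 := rfl
  have hWs : ∀ n, W (n + 1) = V (n + 1) ⊓ (V n)ᗮ := fun n => rfl
  have hWV : ∀ n, W n ≤ V n := by
    intro n
    cases n with
    | zero => exact le_of_eq hW0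
    | succ m => exact (hWs m ▸ inf_le_left)
  have hmemD : ∀ n, ∀ x ∈ W n, x ∈ ⋃ k, (V k : Set H) :=
    fun n x hx => Set.mem_iUnion.2 ⟨n, hWV n hx⟩
  haveI hWfd : ∀ n, FiniteDimensional ℝ (W n) := fun n =>
    Submodule.finiteDimensional_of_le (hWV n)
  -- T preserves each W n
  have hTW : ∀ n, ∀ v ∈ W n, T v ∈ W n := by
    intro n v hv
    cases n with
    | zero => exact hTV 0 v hv
    | succ m =>
      rw [hWs m] at hv ⊢
      rw [Submodule.mem_inf] at hv ⊢
      refine ⟨hTV _ v hv.1, ?_⟩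
      intro u hu
      have h1 : ⟪T u, v⟫ = ⟪u, T v⟫ :=
        hsym u (Set.mem_iUnion.2 ⟨m, hu⟩) v (Set.mem_iUnion.2 ⟨m + 1, hv.1⟩)
      have h2 : ⟪T u, v⟫ = 0 := hv.2 (T u) (hTV m u hu)
      rw [← h1, h2]
  -- pieces are mutually orthogonal
  have horth : ∀ m n, m < n → ∀ x ∈ W m, ∀ y ∈ W n, ⟪x, y⟫ = 0 := by
    intro m n hmn x hx y hy
    obtain ⟨k, rfl⟩ := Nat.exists_eq_add_of_lt hmn
    rw [show m + k + 1 = (m + k) + 1 from rfl, hWs, Submodule.mem_inf] at hy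
    have hxk : x ∈ V (m + k) := hmono (Nat.le_add_right m k) (hWV m hx)
    exact hy.2 x hxk
  -- eigenbases on each piece
  have hsymW : ∀ n, ((T.restrict (hTW n)).IsSymmetric) := by
    intro n x y
    have : ⟪T (x : H), (y : H)⟫ = ⟪(x : H), T (y : H)⟫ :=
      hsym x (hmemD n x x.2) y (hmemD n y y.2)
    simpa [LinearMap.restrict_apply, Submodule.coe_inner] using this
  let d : ℕ → ℕ := fun n => Module.finrank ℝ (W n)
  let b : ∀ n, OrthonormalBasis (Fin (d n)) ℝ (W n) := fun n =>
    (hsymW n).eigenvectorBasis rfl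
  let lam : ∀ n, Fin (d n) → ℝ := fun n => (hsymW n).eigenvalues rfl
  let e : (Σ n, Fin (d n)) → H := fun p => (b p.1 p.2 : H)
  -- each piece is in the span of the family
  have hWspan : ∀ n, W n ≤ Submodule.span ℝ (Set.range e) := by
    intro n x hx
    have hrepr := (b n).sum_repr (⟨x, hx⟩ : W n)
    have hx' : x = ∑ i, ((b n).repr ⟨x, hx⟩ i) • ((b n i : H)) := by
      conv_lhs => rw [show x = ((⟨x, hx⟩ : W n) : H) from rfl, ← hrepr]
      push_cast
      rfl
    rw [hx']
    exact Submodule.sum_mem _ fun i _ =>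
      Submodule.smul_mem _ _ (Submodule.subset_span ⟨⟨n, i⟩, rfl⟩)
  -- the V's are contained in the span
  have hVle : ∀ n, V n ≤ Submodule.span ℝ (Set.range e) := by
    intro n
    induction n with
    | zero => exact hW0 ▸ hWspan 0
    | succ m ih =>
      haveI := hVfd m
      haveI : CompleteSpace (V m) := FiniteDimensional.complete ℝ (V m)
      have heq := Submodule.sup_orthogonal_inf_of_hasOrthogonalProjection (hmono (Nat.le_succ m))
      calc V (m + 1) = V m ⊔ (V m)ᗮ ⊓ V (m + 1) := heq.symm
        _ ≤ Submodule.span ℝ (Set.range e) := by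
            apply sup_le ih
            rw [inf_comm, ← hWs]
            exact hWspan (m + 1)
  refine ⟨Σ n, Fin (d n), e, fun p => lam p.1 p.2, ?_, ?_, ?_, ?_⟩
  · rw [orthonormal_iff_ite]
    rintro ⟨m, i⟩ ⟨n, j⟩
    rcases lt_trichotomy m n with h | h | h
    · rw [if_neg (by simp [Sigma.ext_iff, Nat.ne_of_lt h])]
      exact horth m n h _ (b m i).2 _ (b n j).2
    · subst h
      have hb := (b m).orthonormal
      rw [orthonormal_iff_ite] at hb
      have h2 := hb i j
      rw [Submodule.coe_inner] at h2
      show (inner ℝ (e ⟨m, i⟩) (e ⟨m, j⟩) : ℝ) = _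
      rw [show (inner ℝ (e ⟨m, i⟩) (e ⟨m, j⟩) : ℝ) = inner ℝ ((b m i : H)) ((b m j : H)) from rfl, h2]
      by_cases hij : i = j
      · subst hij; simp
      · rw [if_neg hij, if_neg (by simp [Sigma.ext_iff, hij])]
    · rw [if_neg (by simp [Sigma.ext_iff, (Nat.ne_of_lt h).symm]), real_inner_comm]
      exact horth n m h _ (b n j).2 _ (b m i).2
  · rintro ⟨n, i⟩
    exact hmemD n _ (b n i).2
  · rw [← Submodule.dense_iff_topologicalClosure_eq_top]
    refine hdense.mono ?_
    intro x hx
    obtain ⟨n, hn⟩ := Set.mem_iUnion.1 hx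
    exact hVle n hn
  · rintro ⟨n, i⟩
    have h1 := (hsymW n).apply_eigenvectorBasis rfl i
    have h2 : T ((b n i : H)) = ((T.restrict (hTW n)) (b n i) : H) := by
      simp [LinearMap.restrict_apply]
    show T ((b n i : H)) = lam n i • (b n i : H)
    rw [h2]
    rw [show (hsymW n).eigenvectorBasis rfl i = b n i from rfl] at h1
    rw [h1]
    push_cast
    rfl
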